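/- Let D be a positive integer and let H be a multigraph on a finite vertex set in which every vertex has positive degree and 2·|E(H)| > 5·D. If every edge of H shares at least one endpoint with all but at most D−2 other edges of H (i.e., for every edge vw, the number of edges of H with both endpoints outside {v,w} is at most D−2), then the underlying simple graph H₀ of H is connected. -/

import Mathlib

open scoped Classical

/-- The underlying simple graph of a multigraph with multiplicity function `μ`:
`v` is adjacent to `w` iff `v ≠ w` and `μ(v,w) > 0`. -/
def underlying {V : Type*} (μ : V → V → ℕ) : SimpleGraph V where
  Adj v w := v ≠ w ∧ 0 < μ v w ∧ 0 < μ w v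
  symm := ⟨by rintro v w ⟨h1, h2, h3⟩; exact ⟨h1.symm, h3, h2⟩⟩
  loopless := ⟨by rintro v ⟨h, -⟩; exact h rfl⟩

/-- Let `H` be a multigraph on a finite vertex set in which every vertex has
positive degree and `2·|E(H)| > 5·D`. If every edge of `H` shares at least one
endpoint with all but at most `D−2` other edges, then the underlying simple graph
of `H` is connected. -/
theorem multigraph_connected {V : Type*} [Fintype V] (D : ℕ) (hD : 0 < D)
    (μ : V → V → ℕ)
    (hsymm : ∀ v w : V, μ v w = μ w v)
    (hloop : ∀ v : V, μ v v = 0)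
    (hpos : ∀ v : V, 0 < ∑ w : V, μ v w)
    (hbig : 5 * D < ∑ v : V, ∑ w : V, μ v w)
    (hshare : ∀ v w : V, v ≠ w → 0 < μ v w →
      (∑ x ∈ Finset.univ \ {v, w}, ∑ y ∈ Finset.univ \ {v, w}, μ x y) + 4 ≤ 2 * D) :
    (underlying μ).Connected := by
  classical
  have hne : Nonempty V := by
    by_contra h
    rw [not_nonempty_iff] at h
    simp at hbig
  rw [SimpleGraph.connected_iff]
  refine ⟨?_, hne⟩
  intro u u'
  by_contra hreach
  set S : Finset V := Finset.univ.filter (fun x => (underlying μ).Reachable u x) with hSdef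
  have hu : u ∈ S := by simp only [hSdef, Finset.mem_filter, Finset.mem_univ, true_and]; exact SimpleGraph.Reachable.refl u
  have hu' : u' ∉ S := by simpa [hSdef] using hreach
  have hcross : ∀ x ∈ S, ∀ y, y ∉ S → μ x y = 0 := by
    intro x hx y hy
    by_contra h
    have hxy : x ≠ y := by rintro rfl; exact h (hloop x)
    have hadj : (underlying μ).Adj x y :=
      ⟨hxy, Nat.pos_of_ne_zero h, by rw [hsymm]; exact Nat.pos_of_ne_zero h⟩
    simp only [hSdef, Finset.mem_filter, Finset.mem_univ, true_and] at hx hy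
    exact hy (hx.trans hadj.reachable)
  -- find an edge inside S
  obtain ⟨w, hw⟩ : ∃ w, 0 < μ u w := by
    by_contra h
    push_neg at h
    have : ∑ w : V, μ u w = 0 := Finset.sum_eq_zero fun w _ => Nat.le_zero.mp (h w)
    have := hpos u; omega
  have huw : u ≠ w := by rintro rfl; rw [hloop] at hw; omega
  have hwS : w ∈ S := by
    by_contra h
    exact absurd (hcross u hu w h) (by omega)
  -- find an edge inside Sᶜ
  obtain ⟨w', hw'⟩ : ∃ w', 0 < μ u' w' := by
    by_contra h
    push_neg at h
    have : ∑ w : V, μ u' w = 0 := Finset.sum_eq_zero fun w _ => Nat.le_zero.mp (h w)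
    have := hpos u'; omega
  have hu'w' : u' ≠ w' := by rintro rfl; rw [hloop] at hw'; omega
  have hw'S : w' ∉ S := by
    intro h
    have : μ w' u' = 0 := hcross w' h u' hu'
    rw [hsymm] at hw'; omega
  -- bound sums over the two sides
  have hsub1 : Finset.univ \ S ⊆ Finset.univ \ ({u, w} : Finset V) := by
    intro x hx
    simp only [Finset.mem_sdiff, Finset.mem_univ, true_and, Finset.mem_insert,
      Finset.mem_singleton] at hx ⊢
    rintro (rfl | rfl) <;> exact hx ‹_›
  have hsub2 : S ⊆ Finset.univ \ ({u', w'} : Finset V) := by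
    intro x hx
    simp only [Finset.mem_sdiff, Finset.mem_univ, true_and, Finset.mem_insert,
      Finset.mem_singleton]
    rintro (rfl | rfl)
    · exact hu' hx
    · exact hw'S hx
  have mono : ∀ (A B : Finset V), A ⊆ B →
      (∑ x ∈ A, ∑ y ∈ A, μ x y) ≤ ∑ x ∈ B, ∑ y ∈ B, μ x y := by
    intro A B hAB
    calc (∑ x ∈ A, ∑ y ∈ A, μ x y) ≤ ∑ x ∈ A, ∑ y ∈ B, μ x y :=
          Finset.sum_le_sum fun x _ => Finset.sum_le_sum_of_subset hAB
      _ ≤ ∑ x ∈ B, ∑ y ∈ B, μ x y := Finset.sum_le_sum_of_subset hAB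
  have hboundC : (∑ x ∈ Finset.univ \ S, ∑ y ∈ Finset.univ \ S, μ x y) + 4 ≤ 2 * D :=
    le_trans (by have := mono _ _ hsub1; omega) (hshare u w huw hw)
  have hboundS : (∑ x ∈ S, ∑ y ∈ S, μ x y) + 4 ≤ 2 * D :=
    le_trans (by have := mono _ _ hsub2; omega) (hshare u' w' hu'w' hw')
  -- decompose the total sum
  have hdecomp : (∑ v : V, ∑ w : V, μ v w) =
      (∑ x ∈ S, ∑ y ∈ S, μ x y) + ∑ x ∈ Finset.univ \ S, ∑ y ∈ Finset.univ \ S, μ x y := by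
    have hsplit : ∀ f : V → ℕ, (∑ v : V, f v) = (∑ v ∈ S, f v) + ∑ v ∈ Finset.univ \ S, f v := by
      intro f
      rw [← Finset.sum_sdiff (Finset.subset_univ S)]
      omega
    rw [hsplit]
    congr 1
    · refine Finset.sum_congr rfl fun x hx => ?_
      rw [hsplit]
      have : (∑ y ∈ Finset.univ \ S, μ x y) = 0 :=
        Finset.sum_eq_zero fun y hy => hcross x hx y (Finset.mem_sdiff.mp hy).2
      omega
    · refine Finset.sum_congr rfl fun x hx => ?_
      rw [hsplit]
      have : (∑ y ∈ S, μ x y) = 0 := Finset.sum_eq_zero fun y hy => by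
        rw [hsymm]; exact hcross y hy x (Finset.mem_sdiff.mp hx).2
      omega
  omega
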